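/- Let S be an inverse semigroup, τ a congruence on E(S), and T ⊆ N(τ) a full inverse subsemigroup such that: for all x ∈ S, if there exist idempotents e, f with x⁻¹x τ e, xx⁻¹ τ f, xe ∈ T and fx ∈ T, then x ∈ T. Define ρ = { (x,y) : x⁻¹y ∈ T, x⁻¹yy⁻¹x τ x⁻¹x, y⁻¹xx⁻¹y τ y⁻¹y }. Then ρ is a left congruence on S. -/
import Mathlib

class InverseSemigroup (S : Type*) extends Semigroup S where
  inv : S → S
  mul_inv_mul : ∀ a : S, a * inv a * a = a
  inv_mul_inv : ∀ a : S, inv a * a * inv a = inv a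
  inv_unique : ∀ a b : S, a * b * a = a → b * a * b = b → b = inv a

open InverseSemigroup

/-- `e` is an idempotent. -/
def IsIdem {S : Type*} [Mul S] (e : S) : Prop := e * e = e

/-- `r` is a left congruence: an equivalence relation compatible with left multiplication. -/
def IsLeftCongruence {S : Type*} [Semigroup S] (r : S → S → Prop) : Prop :=
  Equivalence r ∧ ∀ a b c : S, r a b → r (c * a) (c * b)

/-- The inverse kernel of a relation: elements related to `a * a⁻¹`. -/
def InK {S : Type*} [InverseSemigroup S] (r : S → S → Prop) : Set S :=
  {a | r a (a * inv a)}

/-- The kernel: elements related to some idempotent. -/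
def lker {S : Type*} [InverseSemigroup S] (r : S → S → Prop) : Set S :=
  {a | ∃ e, IsIdem e ∧ r a e}

/-- `τ` is a congruence on the semilattice of idempotents `E(S)`. -/
def IsECong {S : Type*} [InverseSemigroup S] (τ : S → S → Prop) : Prop :=
  (∀ e f, τ e f → IsIdem e ∧ IsIdem f) ∧
  (∀ e, IsIdem e → τ e e) ∧
  (∀ e f, τ e f → τ f e) ∧
  (∀ e f g, τ e f → τ f g → τ e g) ∧
  (∀ e f g, IsIdem g → τ e f → τ (g * e) (g * f))

/-- The normaliser of a congruence on the idempotents. -/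
def normaliser {S : Type*} [InverseSemigroup S] (τ : S → S → Prop) : Set S :=
  {a | ∀ e f, τ e f → τ (a * e * inv a) (a * f * inv a) ∧ τ (inv a * e * a) (inv a * f * a)}

/-- `T` is a full inverse subsemigroup of `S`. -/
def IsFullInverseSub {S : Type*} [InverseSemigroup S] (T : Set S) : Prop :=
  (∀ e : S, IsIdem e → e ∈ T) ∧ (∀ a b, a ∈ T → b ∈ T → a * b ∈ T) ∧
  (∀ a, a ∈ T → inv a ∈ T)

namespace IS5

variable {S : Type*} [InverseSemigroup S]

lemma inv_inv' (a : S) : inv (inv a) = a :=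
  (inv_unique (inv a) a (inv_mul_inv a) (mul_inv_mul a)).symm

lemma idem_inv {e : S} (he : IsIdem e) : inv e = e := by
  have h : e * e * e = e := by rw [he, he]
  exact (inv_unique e e h h).symm

lemma isIdem_mul_inv (a : S) : IsIdem (a * inv a) := by
  show a * inv a * (a * inv a) = a * inv a
  rw [← mul_assoc, mul_inv_mul]

lemma isIdem_inv_mul (a : S) : IsIdem (inv a * a) := by
  show inv a * a * (inv a * a) = inv a * a
  rw [← mul_assoc, inv_mul_inv]

lemma idem_pull {e : S} (he : IsIdem e) (t : S) : e * (e * t) = e * t := by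
  rw [← mul_assoc, he]

lemma isIdem_mul {e f : S} (he : IsIdem e) (hf : IsIdem f) : IsIdem (e * f) := by
  set x := inv (e * f) with hx
  have h1 : (e * f) * x * (e * f) = e * f := mul_inv_mul _
  have h2 : x * (e * f) * x = x := inv_mul_inv _
  have h1' : e * (f * (x * (e * f))) = e * f := by
    simpa only [mul_assoc] using h1
  have h2' : x * (e * (f * x)) = x := by
    simpa only [mul_assoc] using h2
  have hmid : ∀ t : S, x * (e * (f * (x * t))) = x * t := by
    intro t
    calc x * (e * (f * (x * t))) = (x * (e * (f * x))) * t := by simp only [mul_assoc]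
      _ = x * t := by rw [h2']
  have p : (e * f) * (f * x * e) * (e * f) = e * f := by
    simp only [mul_assoc]
    rw [idem_pull hf, idem_pull he]
    exact h1'
  have q : (f * x * e) * (e * f) * (f * x * e) = f * x * e := by
    simp only [mul_assoc]
    rw [idem_pull he, idem_pull hf, hmid e]
  have hy : f * x * e = x := (inv_unique (e * f) (f * x * e) p q).trans hx.symm
  have hb : (f * x * e) * (f * x * e) = f * x * e := by
    simp only [mul_assoc]
    rw [hmid e]
  rw [hy] at hb
  have hef : e * f = inv x := inv_unique x (e * f) h2 h1
  show (e * f) * (e * f) = e * f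
  rw [hef, idem_inv hb]
  exact hb

lemma idem_comm {e f : S} (he : IsIdem e) (hf : IsIdem f) : e * f = f * e := by
  have hef : (e * f) * (e * f) = e * f := isIdem_mul he hf
  have hfe : (f * e) * (f * e) = f * e := isIdem_mul hf he
  have hefn : e * (f * (e * f)) = e * f := by simpa only [mul_assoc] using hef
  have hfen : f * (e * (f * e)) = f * e := by simpa only [mul_assoc] using hfe
  have p : (e * f) * (f * e) * (e * f) = e * f := by
    simp only [mul_assoc]
    rw [idem_pull hf, idem_pull he]
    exact hefn
  have q : (f * e) * (e * f) * (f * e) = f * e := by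
    simp only [mul_assoc]
    rw [idem_pull he, idem_pull hf]
    exact hfen
  have hfe_eq : f * e = inv (e * f) := inv_unique (e * f) (f * e) p q
  rw [hfe_eq, idem_inv (isIdem_mul he hf)]

lemma inv_mul_rev (a b : S) : inv (a * b) = inv b * inv a := by
  have hcomm : (b * inv b) * (inv a * a) = (inv a * a) * (b * inv b) :=
    idem_comm (isIdem_mul_inv b) (isIdem_inv_mul a)
  have p : (a * b) * (inv b * inv a) * (a * b) = a * b := by
    calc (a * b) * (inv b * inv a) * (a * b)
        = a * ((b * inv b) * (inv a * a) * b) := by simp only [mul_assoc]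
      _ = a * ((inv a * a) * (b * inv b) * b) := by rw [hcomm]
      _ = (a * inv a * a) * (b * inv b * b) := by simp only [mul_assoc]
      _ = a * b := by rw [mul_inv_mul, mul_inv_mul]
  have q : (inv b * inv a) * (a * b) * (inv b * inv a) = inv b * inv a := by
    calc (inv b * inv a) * (a * b) * (inv b * inv a)
        = inv b * ((inv a * a) * (b * inv b) * inv a) := by simp only [mul_assoc]
      _ = inv b * ((b * inv b) * (inv a * a) * inv a) := by rw [← hcomm]
      _ = (inv b * b * inv b) * (inv a * a * inv a) := by simp only [mul_assoc]
      _ = inv b * inv a := by rw [inv_mul_inv, inv_mul_inv]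
  exact (inv_unique (a * b) (inv b * inv a) p q).symm

lemma inv_invmul (a b : S) : inv (inv a * b) = inv b * a := by
  rw [inv_mul_rev, inv_inv']

lemma isIdem_conj (b : S) {g : S} (hg : IsIdem g) : IsIdem (inv b * g * b) := by
  have hcomm : g * (b * inv b) = (b * inv b) * g := idem_comm hg (isIdem_mul_inv b)
  show (inv b * g * b) * (inv b * g * b) = inv b * g * b
  calc (inv b * g * b) * (inv b * g * b)
      = inv b * (g * (b * inv b) * (g * b)) := by simp only [mul_assoc]
    _ = inv b * ((b * inv b) * g * (g * b)) := by rw [hcomm]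
    _ = (inv b * b * inv b) * (g * (g * b)) := by simp only [mul_assoc]
    _ = inv b * (g * (g * b)) := by rw [inv_mul_inv]
    _ = inv b * (g * b) := by rw [idem_pull hg]
    _ = inv b * g * b := by rw [mul_assoc]

/-- `u * (inv y * y) = u` for `u = inv x * y`. -/
lemma uYY (x y : S) : (inv x * y) * (inv y * y) = inv x * y := by
  calc (inv x * y) * (inv y * y) = inv x * (y * inv y * y) := by simp only [mul_assoc]
    _ = inv x * y := by rw [mul_inv_mul]

/-- `(u u⁻¹) w = u v` for `u = x⁻¹y, v = y⁻¹z, w = x⁻¹z`. -/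
lemma idE0 (x y z : S) :
    ((inv x * y) * inv (inv x * y)) * (inv x * z) = (inv x * y) * (inv y * z) := by
  have hcomm : (y * inv y) * (x * inv x) = (x * inv x) * (y * inv y) :=
    idem_comm (isIdem_mul_inv y) (isIdem_mul_inv x)
  rw [inv_invmul]
  calc ((inv x * y) * (inv y * x)) * (inv x * z)
      = inv x * ((y * inv y) * (x * inv x) * z) := by simp only [mul_assoc]
    _ = inv x * ((x * inv x) * (y * inv y) * z) := by rw [hcomm]
    _ = (inv x * x * inv x) * ((y * inv y) * z) := by simp only [mul_assoc]
    _ = inv x * ((y * inv y) * z) := by rw [inv_mul_inv]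
    _ = (inv x * y) * (inv y * z) := by simp only [mul_assoc]

/-- `w (v⁻¹ v) = u v` for `u = x⁻¹y, v = y⁻¹z, w = x⁻¹z`. -/
lemma idE0' (x y z : S) :
    (inv x * z) * (inv (inv y * z) * (inv y * z)) = (inv x * y) * (inv y * z) := by
  have hcomm : (z * inv z) * (y * inv y) = (y * inv y) * (z * inv z) :=
    idem_comm (isIdem_mul_inv z) (isIdem_mul_inv y)
  rw [inv_invmul]
  calc (inv x * z) * ((inv z * y) * (inv y * z))
      = inv x * ((z * inv z) * (y * inv y) * z) := by simp only [mul_assoc]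
    _ = inv x * ((y * inv y) * (z * inv z) * z) := by rw [hcomm]
    _ = inv x * ((y * inv y) * (z * inv z * z)) := by simp only [mul_assoc]
    _ = inv x * ((y * inv y) * z) := by rw [mul_inv_mul]
    _ = (inv x * y) * (inv y * z) := by simp only [mul_assoc]

lemma conj_vv (u v : S) : u * (v * inv v) * inv u = (u * v) * inv (u * v) := by
  rw [inv_mul_rev]
  simp only [mul_assoc]

lemma conj_uu (u v : S) : inv v * (inv u * u) * v = inv (u * v) * (u * v) := by
  rw [inv_mul_rev]
  simp only [mul_assoc]

lemma idE1 {p : S} (hp : IsIdem p) (w : S) :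
    (p * w) * inv (p * w) = (w * inv w) * p := by
  rw [inv_mul_rev, idem_inv hp]
  have hcomm : p * (w * inv w) = (w * inv w) * p := idem_comm hp (isIdem_mul_inv w)
  calc (p * w) * (inv w * p)
      = (p * (w * inv w)) * p := by simp only [mul_assoc]
    _ = ((w * inv w) * p) * p := by rw [hcomm]
    _ = (w * inv w) * (p * p) := by rw [mul_assoc]
    _ = (w * inv w) * p := by rw [hp]

lemma idE2 {p : S} (hp : IsIdem p) (w : S) :
    inv (w * p) * (w * p) = (inv w * w) * p := by
  rw [inv_mul_rev, idem_inv hp]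
  have hcomm : p * (inv w * w) = (inv w * w) * p := idem_comm hp (isIdem_inv_mul w)
  calc (p * inv w) * (w * p)
      = (p * (inv w * w)) * p := by simp only [mul_assoc]
    _ = ((inv w * w) * p) * p := by rw [hcomm]
    _ = (inv w * w) * (p * p) := by rw [mul_assoc]
    _ = (inv w * w) * p := by rw [hp]

/-- `(w w⁻¹)(x⁻¹ x) = w w⁻¹` for `w = x⁻¹ z`. -/
lemma absorbA (x z : S) :
    ((inv x * z) * inv (inv x * z)) * (inv x * x) = (inv x * z) * inv (inv x * z) := by
  rw [inv_invmul]
  calc ((inv x * z) * (inv z * x)) * (inv x * x)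
      = inv x * (z * (inv z * (x * inv x * x))) := by simp only [mul_assoc]
    _ = inv x * (z * (inv z * x)) := by rw [mul_inv_mul]
    _ = (inv x * z) * (inv z * x) := by simp only [mul_assoc]

/-- `(w⁻¹ w)(z⁻¹ z) = w⁻¹ w` for `w = x⁻¹ z`. -/
lemma absorbB (x z : S) :
    (inv (inv x * z) * (inv x * z)) * (inv z * z) = inv (inv x * z) * (inv x * z) := by
  rw [inv_invmul]
  calc ((inv z * x) * (inv x * z)) * (inv z * z)
      = inv z * (x * (inv x * (z * inv z * z))) := by simp only [mul_assoc]
    _ = inv z * (x * (inv x * z)) := by rw [mul_inv_mul]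
    _ = (inv z * x) * (inv x * z) := by simp only [mul_assoc]

end IS5

open IS5

/-- Key τ-fact for transitivity: from `x ρ y` data and the first τ-condition of `y ρ z`,
derive `τ (x⁻¹ z z⁻¹ x) (x⁻¹ x)` (in the form `τ (w w⁻¹) (x⁻¹x)` for `w = x⁻¹z`). -/
theorem trans_tau1 {S : Type*} [InverseSemigroup S] (τ : S → S → Prop) (T : Set S)
    (hτ : IsECong τ) (hTN : T ⊆ normaliser τ) (x y z : S)
    (hu : inv x * y ∈ T)
    (hα : τ (inv x * y * inv y * x) (inv x * x))
    (hγ : τ (inv y * z * inv z * y) (inv y * y)) :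
    τ ((inv x * z) * inv (inv x * z)) (inv x * x) := by
  obtain ⟨τidem, τrefl, τsymm, τtrans, τcompat⟩ := hτ
  have hα' : τ ((inv x * y) * inv (inv x * y)) (inv x * x) := by
    simpa only [inv_invmul, mul_assoc] using hα
  have hγ' : τ ((inv y * z) * inv (inv y * z)) (inv y * y) := by
    simpa only [inv_invmul, mul_assoc] using hγ
  have h1 := (hTN hu _ _ hγ').1
  -- h1 : τ (u * (v v⁻¹) * u⁻¹) (u * (y⁻¹y) * u⁻¹)
  have e1 : (inv x * y) * (inv y * y) * inv (inv x * y) = (inv x * y) * inv (inv x * y) := by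
    rw [uYY]
  rw [e1] at h1
  have h2 : τ ((inv x * y) * ((inv y * z) * inv (inv y * z)) * inv (inv x * y)) (inv x * x) :=
    τtrans _ _ _ h1 hα'
  have e2 : (inv x * y) * ((inv y * z) * inv (inv y * z)) * inv (inv x * y)
      = ((inv x * z) * inv (inv x * z)) * ((inv x * y) * inv (inv x * y)) := by
    rw [conj_vv, ← idE0, idE1 (isIdem_mul_inv (inv x * y))]
  rw [e2] at h2
  have h4 : τ (((inv x * z) * inv (inv x * z)) * ((inv x * y) * inv (inv x * y)))
      (((inv x * z) * inv (inv x * z)) * (inv x * x)) :=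
    τcompat _ _ _ (isIdem_mul_inv _) hα'
  rw [absorbA] at h4
  exact τtrans _ _ _ (τsymm _ _ h4) h2

theorem stmt5 {S : Type*} [InverseSemigroup S] (τ : S → S → Prop) (T : Set S)
    (hτ : IsECong τ) (hT : IsFullInverseSub T) (hTN : T ⊆ normaliser τ)
    (hD2 : ∀ x e f : S, IsIdem e → IsIdem f → τ (inv x * x) e → τ (x * inv x) f →
      x * e ∈ T → f * x ∈ T → x ∈ T) :
    IsLeftCongruence (fun x y =>
      inv x * y ∈ T ∧ τ (inv x * y * inv y * x) (inv x * x) ∧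
        τ (inv y * x * inv x * y) (inv y * y)) := by
  obtain ⟨τidem, τrefl, τsymm, τtrans, τcompat⟩ := hτ
  obtain ⟨Tfull, Tmul, Tinv⟩ := hT
  constructor
  · constructor
    · -- reflexivity
      intro x
      refine ⟨Tfull _ (isIdem_inv_mul x), ?_, ?_⟩ <;>
      · have e : inv x * x * inv x * x = inv x * x := by
          calc inv x * x * inv x * x = inv x * (x * inv x * x) := by simp only [mul_assoc]
            _ = inv x * x := by rw [mul_inv_mul]
        rw [e]
        exact τrefl _ (isIdem_inv_mul x)
    case symm =>
      rintro x y ⟨h1, h2, h3⟩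
      refine ⟨?_, h3, h2⟩
      rw [show inv y * x = inv (inv x * y) from (inv_invmul x y).symm]
      exact Tinv _ h1
    case trans =>
      rintro x y z ⟨hu, hα, hβ⟩ ⟨hv, hγ, hδ⟩
      have hτ' : IsECong τ := ⟨τidem, τrefl, τsymm, τtrans, τcompat⟩
      -- the two τ facts
      have t1 : τ ((inv x * z) * inv (inv x * z)) (inv x * x) :=
        trans_tau1 τ T hτ' hTN x y z hu hα hγ
      have hvy : inv z * y ∈ T := by
        rw [show inv z * y = inv (inv y * z) from (inv_invmul y z).symm]
        exact Tinv _ hv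
      have t2' : τ ((inv z * x) * inv (inv z * x)) (inv z * z) :=
        trans_tau1 τ T hτ' hTN z y x hvy hδ hβ
      have t2 : τ (inv (inv x * z) * (inv x * z)) (inv z * z) := by
        simpa only [inv_invmul, mul_assoc] using t2'
      -- membership of w = x⁻¹ z in T
      have hα' : τ ((inv x * y) * inv (inv x * y)) (inv x * x) := by
        simpa only [inv_invmul, mul_assoc] using hα
      have hδ'' : τ (inv (inv y * z) * (inv y * z)) (inv z * z) := by
        simpa only [inv_invmul, mul_assoc] using hδ
      have huv : (inv x * y) * (inv y * z) ∈ T := Tmul _ _ hu hv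
      have hwT : inv x * z ∈ T := by
        refine hD2 (inv x * z) (inv (inv y * z) * (inv y * z)) ((inv x * y) * inv (inv x * y))
          (isIdem_inv_mul _) (isIdem_mul_inv _)
          (τtrans _ _ _ t2 (τsymm _ _ hδ''))
          (τtrans _ _ _ t1 (τsymm _ _ hα')) ?_ ?_
        · rw [idE0']; exact huv
        · rw [idE0]; exact huv
      refine ⟨hwT, ?_, ?_⟩
      · simpa only [inv_invmul, mul_assoc] using t1
      · simpa only [inv_invmul, mul_assoc] using t2
  · -- left compatibility
    rintro a b c ⟨hu, hα, hβ⟩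
    have hcc : (inv c * c) * (inv c * c) = inv c * c := isIdem_inv_mul c
    -- membership
    have eP : inv (c * a) * (c * b) = (inv a * b) * (inv b * (inv c * c) * b) := by
      have hcomm : (b * inv b) * (inv c * c) = (inv c * c) * (b * inv b) :=
        idem_comm (isIdem_mul_inv b) (isIdem_inv_mul c)
      rw [inv_mul_rev]
      calc (inv a * inv c) * (c * b)
          = inv a * ((inv c * c) * b) := by simp only [mul_assoc]
        _ = inv a * ((inv c * c) * (b * inv b * b)) := by rw [mul_inv_mul]
        _ = inv a * ((inv c * c) * (b * inv b) * b) := by simp only [mul_assoc]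
        _ = inv a * ((b * inv b) * (inv c * c) * b) := by rw [← hcomm]
        _ = (inv a * b) * (inv b * (inv c * c) * b) := by simp only [mul_assoc]
    have g1 : inv (c * a) * (c * b) ∈ T := by
      rw [eP]
      exact Tmul _ _ hu (Tfull _ (isIdem_conj b (isIdem_inv_mul c)))
    -- the generic τ-condition
    have key : ∀ p q : S, τ (inv p * q * inv q * p) (inv p * p) →
        τ (inv (c * p) * (c * q) * inv (c * q) * (c * p)) (inv (c * p) * (c * p)) := by
      intro p q hpq
      have hcomm : (q * inv q) * (inv c * c) = (inv c * c) * (q * inv q) :=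
        idem_comm (isIdem_mul_inv q) (isIdem_inv_mul c)
      have hcomm2 : (p * inv p) * (inv c * c) = (inv c * c) * (p * inv p) :=
        idem_comm (isIdem_mul_inv p) (isIdem_inv_mul c)
      have eK : (inv (c * p) * (c * p)) * (inv p * p) = inv (c * p) * (c * p) := by
        rw [inv_mul_rev]
        calc (inv p * inv c) * (c * p) * (inv p * p)
            = inv p * ((inv c * c) * (p * inv p * p)) := by simp only [mul_assoc]
          _ = inv p * ((inv c * c) * p) := by rw [mul_inv_mul]
          _ = (inv p * inv c) * (c * p) := by simp only [mul_assoc]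
      have eQ : inv (c * p) * (c * q) * inv (c * q) * (c * p)
          = (inv (c * p) * (c * p)) * (inv p * q * inv q * p) := by
        rw [inv_mul_rev, inv_mul_rev]
        calc inv p * inv c * (c * q) * (inv q * inv c) * (c * p)
            = inv p * ((inv c * c) * ((q * inv q) * (inv c * c)) * p) := by
              simp only [mul_assoc]
          _ = inv p * ((inv c * c) * ((inv c * c) * (q * inv q)) * p) := by rw [hcomm]
          _ = inv p * ((inv c * c) * (inv c * c) * ((q * inv q) * p)) := by
              simp only [mul_assoc]
          _ = inv p * ((inv c * c) * ((q * inv q) * p)) := by rw [hcc]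
          _ = inv p * ((inv c * c) * (p * inv p) * ((q * inv q) * p)) := by
              rw [show (inv c * c) * (p * inv p) * ((q * inv q) * p)
                    = ((p * inv p) * (inv c * c)) * ((q * inv q) * p) from by rw [hcomm2],
                  show ((p * inv p) * (inv c * c)) * ((q * inv q) * p)
                    = p * (inv p * ((inv c * c) * ((q * inv q) * p))) from by
                    simp only [mul_assoc],
                  show inv p * (p * (inv p * ((inv c * c) * ((q * inv q) * p))))
                    = inv p * ((inv c * c) * ((q * inv q) * p)) from by
                    rw [← mul_assoc, ← mul_assoc, inv_mul_inv]]
          _ = inv p * inv c * (c * p) * (inv p * q * inv q * p) := by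
              simp only [mul_assoc]
      have h := τcompat _ _ _ (isIdem_inv_mul (c * p)) hpq
      rw [eK] at h
      rw [eQ]
      exact h
    exact ⟨g1, key a b hα, key b a hβ⟩
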